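/- Let $G$ be a compact group with Haar probability measure, $H_1, H_2 \le G$ closed subgroups that topologically generate $G$ (the closed subgroup generated by $H_1 \cup H_2$ is $G$), and $\rho : G \to U(V)$ a finite-dimensional unitary representation. Let $P = \int_G \rho(g)\, dg$, $P_i = \int_{H_i} \rho(h)\, dh$ (integration with respect to the Haar probability measures of $G$, $H_1$, $H_2$). Then $P = \lim_{k \to \infty} (P_1 P_2)^k$ in $B(V)$. -/

import Mathlib

open Filter Topology MeasureTheory
open scoped ENNReal NNReal

section AuxLemmas

/-- Powers of an element with spectral radius less than one tend to zero. -/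
theorem aux_tendsto_pow_zero_of_spectralRadius_lt_one {A : Type*} [NormedRing A]
    [NormedAlgebra ℂ A] [CompleteSpace A] (a : A) (h : spectralRadius ℂ a < 1) :
    Tendsto (fun n : ℕ => a ^ n) atTop (𝓝 0) := by
  obtain ⟨r, hr1, hr2⟩ := ENNReal.lt_iff_exists_nnreal_btwn.mp h
  have hgel := spectrum.pow_nnnorm_pow_one_div_tendsto_nhds_spectralRadius a
  have hev : ∀ᶠ n : ℕ in atTop, (‖a ^ n‖₊ : ℝ≥0∞) ^ (1 / (n : ℝ)) < (r : ℝ≥0∞) :=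
    hgel.eventually_lt_const hr1
  have hr2' : (r : ℝ) < 1 := by
    have := hr2
    rw [← ENNReal.coe_one, ENNReal.coe_lt_coe] at this
    exact_mod_cast this
  refine squeeze_zero_norm' (a := fun n : ℕ => (r : ℝ) ^ n) ?_ ?_
  · filter_upwards [hev, eventually_ge_atTop 1] with n hn hn1
    have hn0 : (n : ℝ) ≠ 0 := by
      have : (1 : ℕ) ≤ n := hn1
      positivity
    have hpow := ENNReal.rpow_lt_rpow hn (by positivity : (0 : ℝ) < (n : ℝ))
    rw [← ENNReal.rpow_mul, one_div_mul_cancel hn0, ENNReal.rpow_one, ENNReal.rpow_natCast,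
      ← ENNReal.coe_pow, ENNReal.coe_lt_coe] at hpow
    have : ‖a ^ n‖ ≤ (r : ℝ) ^ n := by
      have := hpow.le
      rw [← NNReal.coe_le_coe] at this
      simpa [coe_nnnorm] using this
    exact this
  · exact tendsto_pow_atTop_nhds_zero_of_lt_one (by positivity) hr2'

variable {K : Type*} [Group K] [TopologicalSpace K] [IsTopologicalGroup K] [CompactSpace K]
  [MeasurableSpace K] [BorelSpace K]
  {V : Type*} [NormedAddCommGroup V] [InnerProductSpace ℂ V] [FiniteDimensional ℂ V]

theorem aux_integrable (ν : Measure K) [IsFiniteMeasure ν] {f : K → V →L[ℂ] V}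
    (hf : Continuous f) : Integrable f ν :=
  hf.integrable_of_hasCompactSupport (HasCompactSupport.of_compactSpace f)

/-- If all vectors are fixed, the average fixes them. -/
theorem aux_avg_fixed (ν : Measure K) [IsProbabilityMeasure ν]
    (π : K →* (V ≃ₗᵢ[ℂ] V))
    (hπ : Continuous fun g : K => ((π g).toLinearIsometry.toContinuousLinearMap : V →L[ℂ] V))
    {x : V} (hx : ∀ g : K, ((π g).toLinearIsometry.toContinuousLinearMap : V →L[ℂ] V) x = x) :
    (∫ g : K, ((π g).toLinearIsometry.toContinuousLinearMap : V →L[ℂ] V) ∂ν) x = x := by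
  rw [ContinuousLinearMap.integral_apply (aux_integrable ν hπ)]
  simp only [hx]
  simp [measure_univ]

theorem aux_norm_avg_apply_le (ν : Measure K) [IsProbabilityMeasure ν]
    (π : K →* (V ≃ₗᵢ[ℂ] V))
    (hπ : Continuous fun g : K => ((π g).toLinearIsometry.toContinuousLinearMap : V →L[ℂ] V))
    (x : V) :
    ‖(∫ g : K, ((π g).toLinearIsometry.toContinuousLinearMap : V →L[ℂ] V) ∂ν) x‖ ≤ ‖x‖ := by
  rw [ContinuousLinearMap.integral_apply (aux_integrable ν hπ)]
  calc ‖∫ g : K, ((π g).toLinearIsometry.toContinuousLinearMap : V →L[ℂ] V) x ∂ν‖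
      ≤ ‖x‖ * (ν Set.univ).toReal := by
        apply norm_integral_le_of_norm_le_const
        filter_upwards with g
        exact le_of_eq ((π g).toLinearIsometry.norm_map x)
    _ = ‖x‖ := by simp [measure_univ]

/-- Equality case: if the norm of the average applied to `x` equals `‖x‖`, then `x` is fixed
by every element. -/
theorem aux_fixed_of_norm_eq (ν : Measure K) [ν.IsHaarMeasure] [IsProbabilityMeasure ν]
    (π : K →* (V ≃ₗᵢ[ℂ] V))
    (hπ : Continuous fun g : K => ((π g).toLinearIsometry.toContinuousLinearMap : V →L[ℂ] V))
    {x : V}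
    (hx : ‖(∫ g : K, ((π g).toLinearIsometry.toContinuousLinearMap : V →L[ℂ] V) ∂ν) x‖ = ‖x‖) :
    ∀ g : K, ((π g).toLinearIsometry.toContinuousLinearMap : V →L[ℂ] V) x = x := by
  classical
  set f : K → V →L[ℂ] V := fun g => (π g).toLinearIsometry.toContinuousLinearMap with hfdef
  have hint : Integrable f ν := aux_integrable ν hπ
  rcases eq_or_ne x 0 with rfl | hx0
  · intro g; simp
  set y : V := (∫ g : K, f g ∂ν) x with hydef
  have hyx : ‖y‖ = ‖x‖ := hx
  have happ : y = ∫ g : K, f g x ∂ν := ContinuousLinearMap.integral_apply hint x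
  have hcont_app : Continuous fun g : K => f g x :=
    (ContinuousLinearMap.apply ℂ V x).continuous.comp hπ
  have hint_app : Integrable (fun g : K => f g x) ν :=
    hcont_app.integrable_of_hasCompactSupport (HasCompactSupport.of_compactSpace _)
  have hnormfx : ∀ g : K, ‖f g x‖ = ‖x‖ := fun g => (π g).toLinearIsometry.norm_map x
  -- the inner products
  have hcont_inner : Continuous fun g : K => (inner ℂ y (f g x) : ℂ) :=
    Continuous.inner continuous_const hcont_app
  have hint_inner : Integrable (fun g : K => (inner ℂ y (f g x) : ℂ)) ν :=
    hcont_inner.integrable_of_hasCompactSupport (HasCompactSupport.of_compactSpace _)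
  have h1 : ∫ g : K, (inner ℂ y (f g x) : ℂ) ∂ν = (inner ℂ y y : ℂ) := by
    rw [integral_inner hint_app y, ← happ]
  have h2 : ∫ g : K, (RCLike.re (inner ℂ y (f g x) : ℂ) : ℝ) ∂ν = ‖y‖ ^ 2 := by
    rw [integral_re hint_inner, h1]
    exact inner_self_eq_norm_sq y
  set φ : K → ℝ := fun g => ‖x‖ * ‖y‖ - RCLike.re (inner ℂ y (f g x) : ℂ)
  have hφcont : Continuous φ := by
    apply Continuous.sub continuous_const
    exact RCLike.continuous_re.comp hcont_inner
  have hφnonneg : ∀ g : K, 0 ≤ φ g := by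
    intro g
    have : RCLike.re (inner ℂ y (f g x) : ℂ) ≤ ‖y‖ * ‖f g x‖ := re_inner_le_norm y (f g x)
    rw [hnormfx g] at this
    simp only [φ, sub_nonneg]
    linarith [this]
  have hφint : Integrable φ ν := by
    apply Integrable.sub (integrable_const _)
    exact (RCLike.continuous_re.comp hcont_inner).integrable_of_hasCompactSupport
      (HasCompactSupport.of_compactSpace _)
  have hφzero : ∫ g : K, φ g ∂ν = 0 := by
    have : ∫ g : K, φ g ∂ν =
        (∫ _ : K, (‖x‖ * ‖y‖) ∂ν) - ∫ g : K, (RCLike.re (inner ℂ y (f g x) : ℂ) : ℝ) ∂ν := by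
      apply integral_sub (integrable_const _)
      exact (RCLike.continuous_re.comp hcont_inner).integrable_of_hasCompactSupport
        (HasCompactSupport.of_compactSpace _)
    rw [this, h2, integral_const]
    simp [measure_univ, hyx]
    ring
  have hφae : φ =ᵐ[ν] 0 := (integral_eq_zero_iff_of_nonneg hφnonneg hφint).mp hφzero
  have hφeq : φ = 0 := (hφcont.ae_eq_iff_eq ν continuous_const).mp hφae
  have hre : ∀ g : K, RCLike.re (inner ℂ y (f g x) : ℂ) = ‖x‖ * ‖y‖ := by
    intro g
    have := congrFun hφeq g
    simp only [φ, Pi.zero_apply, sub_eq_zero] at this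
    linarith [this]
  have hfy : ∀ g : K, f g x = y := by
    intro g
    have hexp : ‖f g x - y‖ ^ 2 = ‖f g x‖ ^ 2 - 2 * RCLike.re (inner ℂ (f g x) y : ℂ) + ‖y‖ ^ 2 :=
      norm_sub_sq (𝕜 := ℂ) (f g x) y
    have hsym : RCLike.re (inner ℂ (f g x) y : ℂ) = RCLike.re (inner ℂ y (f g x) : ℂ) :=
      inner_re_symm (f g x) y
    rw [hsym, hre g, hnormfx g, hyx] at hexp
    have : ‖f g x - y‖ ^ 2 = 0 := by rw [hexp]; ring
    have := pow_eq_zero_iff (n := 2) (by norm_num) |>.mp this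
    exact sub_eq_zero.mp (norm_eq_zero.mp this)
  have hxy : y = x := by
    have h1' := hfy 1
    have : f 1 = ContinuousLinearMap.id ℂ V := by
      ext v
      simp [f]
    rw [this] at h1'
    simpa using h1'.symm
  intro g
  rw [hfy g, hxy]

theorem aux_clm_mul {V : Type*} [NormedAddCommGroup V] [InnerProductSpace ℂ V]
    (e₁ e₂ : V ≃ₗᵢ[ℂ] V) :
    (((e₁ * e₂).toLinearIsometry.toContinuousLinearMap : V →L[ℂ] V)) =
      e₁.toLinearIsometry.toContinuousLinearMap * e₂.toLinearIsometry.toContinuousLinearMap := by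
  ext v
  rfl

theorem aux_clm_one {V : Type*} [NormedAddCommGroup V] [InnerProductSpace ℂ V] :
    (((1 : V ≃ₗᵢ[ℂ] V).toLinearIsometry.toContinuousLinearMap : V →L[ℂ] V)) = 1 := by
  ext v
  rfl

section Transl

variable {K : Type*} [Group K] [TopologicalSpace K] [IsTopologicalGroup K] [CompactSpace K]
  [MeasurableSpace K] [BorelSpace K]
  {V : Type*} [NormedAddCommGroup V] [InnerProductSpace ℂ V] [FiniteDimensional ℂ V]

theorem aux_transl_left (ν : Measure K) [ν.IsMulLeftInvariant] [IsProbabilityMeasure ν]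
    (π : K →* (V ≃ₗᵢ[ℂ] V))
    (hπ : Continuous fun g : K => ((π g).toLinearIsometry.toContinuousLinearMap : V →L[ℂ] V))
    (g : K) :
    ((π g).toLinearIsometry.toContinuousLinearMap : V →L[ℂ] V) *
        (∫ k : K, ((π k).toLinearIsometry.toContinuousLinearMap : V →L[ℂ] V) ∂ν) =
      ∫ k : K, ((π k).toLinearIsometry.toContinuousLinearMap : V →L[ℂ] V) ∂ν := by
  have hint := aux_integrable ν hπ
  have hc := (ContinuousLinearMap.mul ℂ (V →L[ℂ] V)
    ((π g).toLinearIsometry.toContinuousLinearMap)).integral_comp_comm hint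
  calc ((π g).toLinearIsometry.toContinuousLinearMap : V →L[ℂ] V) *
        (∫ k : K, ((π k).toLinearIsometry.toContinuousLinearMap : V →L[ℂ] V) ∂ν)
      = ∫ k : K, ((π g).toLinearIsometry.toContinuousLinearMap : V →L[ℂ] V) *
          ((π k).toLinearIsometry.toContinuousLinearMap : V →L[ℂ] V) ∂ν := hc.symm
    _ = ∫ k : K, ((π (g * k)).toLinearIsometry.toContinuousLinearMap : V →L[ℂ] V) ∂ν := by
        simp_rw [map_mul, aux_clm_mul]
    _ = ∫ k : K, ((π k).toLinearIsometry.toContinuousLinearMap : V →L[ℂ] V) ∂ν :=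
        integral_mul_left_eq_self
          (fun k : K => ((π k).toLinearIsometry.toContinuousLinearMap : V →L[ℂ] V)) g

theorem aux_transl_right (ν : Measure K) [ν.IsMulRightInvariant] [IsProbabilityMeasure ν]
    (π : K →* (V ≃ₗᵢ[ℂ] V))
    (hπ : Continuous fun g : K => ((π g).toLinearIsometry.toContinuousLinearMap : V →L[ℂ] V))
    (g : K) :
    (∫ k : K, ((π k).toLinearIsometry.toContinuousLinearMap : V →L[ℂ] V) ∂ν) *
        ((π g).toLinearIsometry.toContinuousLinearMap : V →L[ℂ] V) =
      ∫ k : K, ((π k).toLinearIsometry.toContinuousLinearMap : V →L[ℂ] V) ∂ν := by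
  have hint := aux_integrable ν hπ
  have hc := ((ContinuousLinearMap.mul ℂ (V →L[ℂ] V)).flip
    ((π g).toLinearIsometry.toContinuousLinearMap)).integral_comp_comm hint
  calc (∫ k : K, ((π k).toLinearIsometry.toContinuousLinearMap : V →L[ℂ] V) ∂ν) *
        ((π g).toLinearIsometry.toContinuousLinearMap : V →L[ℂ] V)
      = ∫ k : K, ((π k).toLinearIsometry.toContinuousLinearMap : V →L[ℂ] V) *
          ((π g).toLinearIsometry.toContinuousLinearMap : V →L[ℂ] V) ∂ν := hc.symm
    _ = ∫ k : K, ((π (k * g)).toLinearIsometry.toContinuousLinearMap : V →L[ℂ] V) ∂ν := by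
        simp_rw [map_mul, aux_clm_mul]
    _ = ∫ k : K, ((π k).toLinearIsometry.toContinuousLinearMap : V →L[ℂ] V) ∂ν :=
        integral_mul_right_eq_self
          (fun k : K => ((π k).toLinearIsometry.toContinuousLinearMap : V →L[ℂ] V)) g

theorem aux_int_mul (ν : Measure K) [IsProbabilityMeasure ν] {f : K → V →L[ℂ] V}
    (hf : Continuous f) (A : V →L[ℂ] V) (h : ∀ k : K, f k * A = A) :
    (∫ k : K, f k ∂ν) * A = A := by
  have hint := aux_integrable ν hf
  have hc := ((ContinuousLinearMap.mul ℂ (V →L[ℂ] V)).flip A).integral_comp_comm hint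
  calc (∫ k : K, f k ∂ν) * A = ∫ k : K, f k * A ∂ν := hc.symm
    _ = ∫ _ : K, A ∂ν := by simp_rw [h]
    _ = A := by simp [measure_univ]

theorem aux_mul_int (ν : Measure K) [IsProbabilityMeasure ν] {f : K → V →L[ℂ] V}
    (hf : Continuous f) (A : V →L[ℂ] V) (h : ∀ k : K, A * f k = A) :
    A * (∫ k : K, f k ∂ν) = A := by
  have hint := aux_integrable ν hf
  have hc := (ContinuousLinearMap.mul ℂ (V →L[ℂ] V) A).integral_comp_comm hint
  calc A * (∫ k : K, f k ∂ν) = ∫ k : K, A * f k ∂ν := hc.symm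
    _ = ∫ _ : K, A ∂ν := by simp_rw [h]
    _ = A := by simp [measure_univ]

end Transl

/-- Abstract core: if `P, P₁, P₂` satisfy the absorption identities, the contraction bounds,
and the equality-case rigidity properties, then `(P₁ * P₂) ^ k → P`. -/
theorem aux_main {V : Type*} [NormedAddCommGroup V] [InnerProductSpace ℂ V]
    [FiniteDimensional ℂ V] (P P₁ P₂ : V →L[ℂ] V)
    (hP₁P : P₁ * P = P) (hP₂P : P₂ * P = P) (hPP₁ : P * P₁ = P) (hPP₂ : P * P₂ = P)
    (hPP : P * P = P)
    (hn₁ : ∀ x : V, ‖P₁ x‖ ≤ ‖x‖) (hn₂ : ∀ x : V, ‖P₂ x‖ ≤ ‖x‖)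
    (hk₂ : ∀ x : V, ‖P₂ x‖ = ‖x‖ → P₂ x = x)
    (hk : ∀ x : V, ‖P₁ x‖ = ‖x‖ → ‖P₂ x‖ = ‖x‖ → P x = x) :
    Tendsto (fun k : ℕ => (P₁ * P₂) ^ k) atTop (𝓝 P) := by
  rcases subsingleton_or_nontrivial V with hV | hV
  · haveI : Subsingleton (V →L[ℂ] V) :=
      ⟨fun a b => ContinuousLinearMap.ext fun v => Subsingleton.elim _ _⟩
    exact Tendsto.congr (fun k => Subsingleton.elim _ _) tendsto_const_nhds
  haveI : Nontrivial (V →L[ℂ] V) := by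
    obtain ⟨v, hv⟩ := exists_ne (0 : V)
    exact ⟨1, 0, fun h => hv (by simpa using DFunLike.congr_fun h v)⟩
  set T : V →L[ℂ] V := P₁ * P₂ with hTdef
  set S : V →L[ℂ] V := T - P with hSdef
  have hTP : T * P = P := by rw [hTdef, mul_assoc, hP₂P, hP₁P]
  have hPT : P * T = P := by rw [hTdef, ← mul_assoc, hPP₁, hPP₂]
  have hTkP : ∀ k : ℕ, T ^ k * P = P := by
    intro k
    induction k with
    | zero => simp
    | succ n ih => rw [pow_succ, mul_assoc, hTP, ih]
  have hSk : ∀ k : ℕ, 1 ≤ k → S ^ k = T ^ k - P := by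
    intro k hk'
    induction k with
    | zero => omega
    | succ n ih =>
      rcases Nat.eq_or_lt_of_le hk' with h | h
      · rw [← h]
        simp [hSdef]
      · have hn : 1 ≤ n := by omega
        rw [pow_succ, ih hn, hSdef]
        have hcalc : (T ^ n - P) * (T - P) = T ^ n * T - P := by
          rw [sub_mul, mul_sub, mul_sub, hTkP n, hPT, hPP]
          abel
        rw [hcalc, ← pow_succ]
  have hspec : ∀ z ∈ spectrum ℂ S, ‖z‖₊ < 1 := by
    intro z hz
    by_contra hge
    push_neg at hge
    have heq : spectrum ℂ S = spectrum ℂ (S : V →ₗ[ℂ] V) := by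
      conv_lhs =>
        rw [show S = (Module.End.toContinuousLinearMap (𝕜 := ℂ) V) (S : V →ₗ[ℂ] V) from rfl]
      exact AlgEquiv.spectrum_eq _ _
    have hev : Module.End.HasEigenvalue (S : V →ₗ[ℂ] V) z :=
      Module.End.hasEigenvalue_iff_mem_spectrum.mpr (heq ▸ hz)
    obtain ⟨x, hx⟩ := hev.exists_hasEigenvector
    have hx0 : x ≠ 0 := hx.2
    have hSx : S x = z • x := hx.apply_eq_smul
    have hz0 : z ≠ 0 := by
      intro h
      rw [h] at hge
      simp at hge
    have hnz : (1 : ℝ) ≤ ‖z‖ := by exact_mod_cast hge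
    have hPx : P x = 0 := by
      have hPS : P * S = 0 := by
        rw [hSdef, mul_sub, hPT, hPP, sub_self]
      have h0 : P (S x) = 0 := by
        have hh := ContinuousLinearMap.mul_apply P S x
        rw [hPS] at hh
        simpa using hh.symm
      rw [hSx, ContinuousLinearMap.map_smul, smul_eq_zero] at h0
      rcases h0 with h | h
      · exact absurd h hz0
      · exact h
    have hTx : T x = z • x := by
      have h1 : S x = T x - P x := rfl
      rw [hPx, sub_zero] at h1
      rw [← h1, hSx]
    have hTx_apply : T x = P₁ (P₂ x) := rfl
    have hTx_norm : ‖T x‖ = ‖z‖ * ‖x‖ := by rw [hTx, norm_smul]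
    have hxleT : ‖x‖ ≤ ‖T x‖ := by
      rw [hTx_norm]
      nlinarith [norm_nonneg x]
    have h2eq : ‖P₂ x‖ = ‖x‖ := by
      apply le_antisymm (hn₂ x)
      calc ‖x‖ ≤ ‖T x‖ := hxleT
        _ = ‖P₁ (P₂ x)‖ := by rw [hTx_apply]
        _ ≤ ‖P₂ x‖ := hn₁ _
    have hP₂x : P₂ x = x := hk₂ x h2eq
    have h1eq : ‖P₁ x‖ = ‖x‖ := by
      apply le_antisymm (hn₁ x)
      calc ‖x‖ ≤ ‖T x‖ := hxleT
        _ = ‖P₁ (P₂ x)‖ := by rw [hTx_apply]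
        _ = ‖P₁ x‖ := by rw [hP₂x]
    have hPxx : P x = x := hk x h1eq h2eq
    rw [hPx] at hPxx
    exact hx0 hPxx.symm
  have hsr : spectralRadius ℂ S < 1 := by
    have := spectrum.spectralRadius_lt_of_forall_lt (a := S) (r := 1) hspec
    simpa using this
  have hS0 : Tendsto (fun n : ℕ => S ^ n) atTop (𝓝 0) :=
    aux_tendsto_pow_zero_of_spectralRadius_lt_one S hsr
  have h1 : Tendsto (fun k : ℕ => S ^ k + P) atTop (𝓝 (0 + P)) := hS0.add tendsto_const_nhds
  rw [zero_add] at h1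
  apply h1.congr'
  filter_upwards [eventually_ge_atTop 1] with k hk'
  rw [hSk k hk', sub_add_cancel]

end AuxLemmas

theorem haar_projection_limit_of_topologically_generating_subgroups
    {G : Type*} [Group G] [TopologicalSpace G] [IsTopologicalGroup G] [CompactSpace G]
    [MeasurableSpace G] [BorelSpace G]
    (μ : Measure G) [μ.IsHaarMeasure] [IsProbabilityMeasure μ]
    (H₁ H₂ : Subgroup G) (hc₁ : IsClosed (H₁ : Set G)) (hc₂ : IsClosed (H₂ : Set G))
    (ν₁ : Measure H₁) [ν₁.IsHaarMeasure] [IsProbabilityMeasure ν₁]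
    (ν₂ : Measure H₂) [ν₂.IsHaarMeasure] [IsProbabilityMeasure ν₂]
    (hgen : (H₁ ⊔ H₂).topologicalClosure = ⊤)
    {V : Type*} [NormedAddCommGroup V] [InnerProductSpace ℂ V] [FiniteDimensional ℂ V]
    (ρ : G →* (V ≃ₗᵢ[ℂ] V))
    (hρ : Continuous fun g : G => ((ρ g).toLinearIsometry.toContinuousLinearMap : V →L[ℂ] V)) :
    Tendsto
      (fun k : ℕ =>
        ((∫ h : H₁, ((ρ (h : G)).toLinearIsometry.toContinuousLinearMap : V →L[ℂ] V) ∂ν₁) *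
         (∫ h : H₂, ((ρ (h : G)).toLinearIsometry.toContinuousLinearMap : V →L[ℂ] V) ∂ν₂)) ^ k)
      atTop
      (𝓝 (∫ g : G, ((ρ g).toLinearIsometry.toContinuousLinearMap : V →L[ℂ] V) ∂μ)) := by
  haveI : LocallyCompactSpace G := inferInstance
  haveI hright : μ.IsMulRightInvariant := by
    constructor
    intro g
    haveI : IsProbabilityMeasure (μ.map (· * g)) :=
      Measure.isProbabilityMeasure_map (measurable_mul_const g).aemeasurable
    exact Measure.isHaarMeasure_eq_of_isProbabilityMeasure _ μ
  haveI : CompactSpace H₁ := isCompact_iff_compactSpace.mp hc₁.isCompact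
  haveI : CompactSpace H₂ := isCompact_iff_compactSpace.mp hc₂.isCompact
  haveI : BorelSpace H₁ := Subtype.borelSpace (H₁ : Set G)
  haveI : BorelSpace H₂ := Subtype.borelSpace (H₂ : Set G)
  set π₁ : H₁ →* (V ≃ₗᵢ[ℂ] V) := ρ.comp H₁.subtype with hπ₁def
  set π₂ : H₂ →* (V ≃ₗᵢ[ℂ] V) := ρ.comp H₂.subtype with hπ₂def
  have hπ₁ : Continuous fun h : H₁ =>
      ((π₁ h).toLinearIsometry.toContinuousLinearMap : V →L[ℂ] V) :=
    hρ.comp continuous_subtype_val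
  have hπ₂ : Continuous fun h : H₂ =>
      ((π₂ h).toLinearIsometry.toContinuousLinearMap : V →L[ℂ] V) :=
    hρ.comp continuous_subtype_val
  -- translation invariance of the big average
  have htl : ∀ g : G, ((ρ g).toLinearIsometry.toContinuousLinearMap : V →L[ℂ] V) *
      (∫ k : G, ((ρ k).toLinearIsometry.toContinuousLinearMap : V →L[ℂ] V) ∂μ) =
      ∫ k : G, ((ρ k).toLinearIsometry.toContinuousLinearMap : V →L[ℂ] V) ∂μ :=
    aux_transl_left μ ρ hρ
  have htr : ∀ g : G, (∫ k : G, ((ρ k).toLinearIsometry.toContinuousLinearMap : V →L[ℂ] V) ∂μ) *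
      ((ρ g).toLinearIsometry.toContinuousLinearMap : V →L[ℂ] V) =
      ∫ k : G, ((ρ k).toLinearIsometry.toContinuousLinearMap : V →L[ℂ] V) ∂μ :=
    aux_transl_right μ ρ hρ
  apply aux_main
  -- P₁ * P = P
  · exact aux_int_mul ν₁ (hρ.comp continuous_subtype_val) _ (fun h => htl ↑h)
  -- P₂ * P = P
  · exact aux_int_mul ν₂ (hρ.comp continuous_subtype_val) _ (fun h => htl ↑h)
  -- P * P₁ = P
  · exact aux_mul_int ν₁ (hρ.comp continuous_subtype_val) _ (fun h => htr ↑h)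
  -- P * P₂ = P
  · exact aux_mul_int ν₂ (hρ.comp continuous_subtype_val) _ (fun h => htr ↑h)
  -- P * P = P
  · exact aux_mul_int μ hρ _ htr
  -- norm bounds
  · exact fun x => aux_norm_avg_apply_le ν₁ π₁ hπ₁ x
  · exact fun x => aux_norm_avg_apply_le ν₂ π₂ hπ₂ x
  -- rigidity for P₂
  · intro x hx
    exact aux_avg_fixed ν₂ π₂ hπ₂ (aux_fixed_of_norm_eq ν₂ π₂ hπ₂ hx)
  -- joint rigidity gives P x = x
  · intro x hx1 hx2
    have hfix1 : ∀ h : H₁, ((ρ (h : G)).toLinearIsometry.toContinuousLinearMap : V →L[ℂ] V) x = x :=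
      aux_fixed_of_norm_eq ν₁ π₁ hπ₁ hx1
    have hfix2 : ∀ h : H₂, ((ρ (h : G)).toLinearIsometry.toContinuousLinearMap : V →L[ℂ] V) x = x :=
      aux_fixed_of_norm_eq ν₂ π₂ hπ₂ hx2
    set Γ : Subgroup G :=
      { carrier := {g : G | ((ρ g).toLinearIsometry.toContinuousLinearMap : V →L[ℂ] V) x = x}
        one_mem' := by
          show ((ρ 1).toLinearIsometry.toContinuousLinearMap : V →L[ℂ] V) x = x
          rw [map_one, aux_clm_one]
          rfl
        mul_mem' := by
          intro a b ha hb
          show ((ρ (a * b)).toLinearIsometry.toContinuousLinearMap : V →L[ℂ] V) x = x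
          rw [map_mul, aux_clm_mul, ContinuousLinearMap.mul_apply]
          rw [show ((ρ b).toLinearIsometry.toContinuousLinearMap : V →L[ℂ] V) x = x from hb,
            show ((ρ a).toLinearIsometry.toContinuousLinearMap : V →L[ℂ] V) x = x from ha]
        inv_mem' := by
          intro a ha
          show ((ρ a⁻¹).toLinearIsometry.toContinuousLinearMap : V →L[ℂ] V) x = x
          conv_lhs =>
            rw [← show ((ρ a).toLinearIsometry.toContinuousLinearMap : V →L[ℂ] V) x = x from ha]
          rw [← ContinuousLinearMap.mul_apply, ← aux_clm_mul, ← map_mul, inv_mul_cancel, map_one,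
            aux_clm_one]
          rfl } with hΓdef
    have hΓ1 : H₁ ≤ Γ := fun g hg => hfix1 ⟨g, hg⟩
    have hΓ2 : H₂ ≤ Γ := fun g hg => hfix2 ⟨g, hg⟩
    have hΓc : IsClosed (Γ : Set G) := by
      have hface : (Γ : Set G) =
          (fun g : G => ((ρ g).toLinearIsometry.toContinuousLinearMap : V →L[ℂ] V) x) ⁻¹' {x} :=
        rfl
      rw [hface]
      exact isClosed_singleton.preimage ((ContinuousLinearMap.apply ℂ V x).continuous.comp hρ)
    have htop : (⊤ : Subgroup G) ≤ Γ := by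
      rw [← hgen]
      exact Subgroup.topologicalClosure_minimal _ (sup_le hΓ1 hΓ2) hΓc
    exact aux_avg_fixed μ ρ hρ (fun g => htop (Subgroup.mem_top g))
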